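/- Let q > 2 be odd. For every n ≥ 1, f_{2,q}(n+1) ≥ f_{2,q}(n), i.e., f_{2,q} is nondecreasing on positive integers. -/

import Mathlib

open Filter Real

/-- Number of representations of `n` as a sum of distinct terms of the form `p^a * q^b`. -/
noncomputable def fpq (p q n : ℕ) : ℕ :=
  Set.ncard {S : Finset ℕ | (∀ k ∈ S, ∃ a b : ℕ, k = p ^ a * q ^ b) ∧ S.sum id = n}

private lemma two_pow_not_mem (S : Finset ℕ) : ∃ j, 2 ^ j ∉ S := by
  refine ⟨S.sup id, fun h => ?_⟩
  have h1 := Finset.le_sup (f := id) h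
  have h2 := Nat.lt_two_pow_self (n := S.sup id)
  simp only [id] at h1
  omega

/-- The length of the initial chain of powers of 2 in `S`. -/
noncomputable def kk (S : Finset ℕ) : ℕ := Nat.find (two_pow_not_mem S)

/-- The carry map: if `1 ∈ S`, replace the maximal chain `1,2,...,2^(k-1)` by `2^k`,
otherwise insert `1`. Either way the sum increases by 1. -/
noncomputable def gmap (S : Finset ℕ) : Finset ℕ :=
  if 1 ∈ S then insert (2 ^ kk S) (S \ (Finset.range (kk S)).image (2 ^ ·))
  else insert 1 S

private lemma kk_spec (S : Finset ℕ) : 2 ^ kk S ∉ S := Nat.find_spec (two_pow_not_mem S)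

private lemma kk_min {S : Finset ℕ} {i : ℕ} (h : i < kk S) : 2 ^ i ∈ S := by
  have := Nat.find_min (two_pow_not_mem S) h
  simpa using this

private lemma kk_pos {S : Finset ℕ} (h : 1 ∈ S) : 0 < kk S := by
  rcases Nat.eq_zero_or_pos (kk S) with h0 | h0
  · exfalso; have := kk_spec S; rw [h0] at this; simp at this; exact this h
  · exact h0

private lemma chain_subset {S : Finset ℕ} :
    (Finset.range (kk S)).image (2 ^ ·) ⊆ S := by
  intro x hx
  simp only [Finset.mem_image, Finset.mem_range] at hx
  obtain ⟨i, hi, rfl⟩ := hx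
  exact kk_min hi

private lemma sum_chain (k : ℕ) :
    ((Finset.range k).image (2 ^ ·)).sum id + 1 = 2 ^ k := by
  rw [Finset.sum_image (fun a _ b _ h => Nat.pow_right_injective le_rfl h)]
  induction k with
  | zero => simp
  | succ k ih => rw [Finset.sum_range_succ, pow_succ]; simp only [id] at ih ⊢; omega

private lemma gmap_sum (S : Finset ℕ) : (gmap S).sum id = S.sum id + 1 := by
  unfold gmap
  split_ifs with h1
  · have hnot : 2 ^ kk S ∉ S \ (Finset.range (kk S)).image (2 ^ ·) := fun hc =>
      kk_spec S (Finset.mem_sdiff.mp hc).1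
    rw [Finset.sum_insert hnot]
    have hsd := Finset.sum_sdiff (f := id) (chain_subset (S := S))
    have hc := sum_chain (kk S)
    simp only [id] at *
    omega
  · rw [Finset.sum_insert h1]
    simp only [id]
    omega

private lemma gmap_form {q : ℕ} {S : Finset ℕ}
    (h : ∀ k ∈ S, ∃ a b : ℕ, k = 2 ^ a * q ^ b) :
    ∀ k ∈ gmap S, ∃ a b : ℕ, k = 2 ^ a * q ^ b := by
  unfold gmap
  split_ifs with h1 <;> intro x hx <;> rw [Finset.mem_insert] at hx
  · rcases hx with rfl | hx
    · exact ⟨kk S, 0, by simp⟩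
    · exact h x (Finset.mem_sdiff.mp hx).1
  · rcases hx with rfl | hx
    · exact ⟨0, 0, by simp⟩
    · exact h x hx

private lemma one_not_mem_gmap {S : Finset ℕ} (h1 : 1 ∈ S) : 1 ∉ gmap S := by
  unfold gmap
  rw [if_pos h1, Finset.mem_insert]
  rintro (h | h)
  · have := kk_pos h1
    have : (2 : ℕ) ^ kk S ≥ 2 ^ 1 := Nat.pow_le_pow_right (by norm_num) this
    omega
  · rw [Finset.mem_sdiff] at h
    exact h.2 (Finset.mem_image.mpr ⟨0, Finset.mem_range.mpr (kk_pos h1), by simp⟩)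

private lemma pow_mem_gmap {S : Finset ℕ} (h1 : 1 ∈ S) {j : ℕ} :
    2 ^ j ∈ gmap S ↔ j = kk S ∨ (kk S < j ∧ 2 ^ j ∈ S) := by
  unfold gmap
  rw [if_pos h1, Finset.mem_insert]
  constructor
  · rintro (h | h)
    · exact Or.inl (Nat.pow_right_injective le_rfl h)
    · rw [Finset.mem_sdiff] at h
      have hj : ¬ j < kk S := fun hc =>
        h.2 (Finset.mem_image.mpr ⟨j, Finset.mem_range.mpr hc, rfl⟩)
      have hj2 : j ≠ kk S := fun hc => kk_spec S (hc ▸ h.1)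
      exact Or.inr ⟨by omega, h.1⟩
  · rintro (rfl | ⟨hlt, hmem⟩)
    · exact Or.inl rfl
    · refine Or.inr (Finset.mem_sdiff.mpr ⟨hmem, fun hc => ?_⟩)
      obtain ⟨i, hi, hie⟩ := Finset.mem_image.mp hc
      rw [Finset.mem_range] at hi
      have := Nat.pow_right_injective le_rfl hie
      omega

private lemma gmap_injOn : Set.InjOn gmap Set.univ := by
  intro S1 _ S2 _ heq
  by_cases h1 : 1 ∈ S1 <;> by_cases h2 : 1 ∈ S2
  · -- both carry
    have hk : kk S1 = kk S2 := by
      by_contra hne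
      rcases Nat.lt_or_ge (kk S1) (kk S2) with hlt | hge
      · have hm : 2 ^ kk S1 ∈ gmap S1 := (pow_mem_gmap h1).mpr (Or.inl rfl)
        rw [heq, pow_mem_gmap h2] at hm
        omega
      · have hm : 2 ^ kk S2 ∈ gmap S2 := (pow_mem_gmap h2).mpr (Or.inl rfl)
        rw [← heq, pow_mem_gmap h1] at hm
        omega
    have key : ∀ S : Finset ℕ, 1 ∈ S →
        S = (gmap S).erase (2 ^ kk S) ∪ (Finset.range (kk S)).image (2 ^ ·) := by
      intro S hS
      unfold gmap
      rw [if_pos hS, Finset.erase_insert (fun hc => kk_spec S (Finset.mem_sdiff.mp hc).1)]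
      exact (Finset.sdiff_union_of_subset chain_subset).symm
    rw [key S1 h1, key S2 h2, heq, hk]
  · exact absurd (heq ▸ one_not_mem_gmap h1) (by
      unfold gmap; rw [if_neg h2]; simp)
  · exact absurd (heq ▸ (by unfold gmap; rw [if_neg h1]; exact Finset.mem_insert_self 1 S1 : 1 ∈ gmap S1)) (by simpa using one_not_mem_gmap h2)
  · have : S1 = (insert 1 S1).erase 1 := by rw [Finset.erase_insert h1]
    rw [this]
    have heq' : insert 1 S1 = insert 1 S2 := by
      unfold gmap at heq; rw [if_neg h1, if_neg h2] at heq; exact heq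
    rw [heq', Finset.erase_insert h2]

theorem stmt6 (q : ℕ) (hq : 2 < q) (hodd : Odd q) (n : ℕ) (hn : 1 ≤ n) :
    fpq 2 q n ≤ fpq 2 q (n + 1) := by
  unfold fpq
  refine Set.ncard_le_ncard_of_injOn gmap ?_ ?_ ?_
  · rintro S ⟨hform, hsum⟩
    exact ⟨gmap_form hform, by rw [gmap_sum, hsum]⟩
  · exact gmap_injOn.mono (Set.subset_univ _)
  · apply Set.Finite.subset (Finset.finite_toSet ((Finset.range (n + 2)).powerset))
    rintro S ⟨hform, hsum⟩
    simp only [Finset.coe_powerset, Set.mem_preimage, Set.mem_powerset_iff,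
      Finset.coe_subset, Finset.mem_coe, Finset.mem_powerset]
    intro x hx
    have := Finset.single_le_sum (f := id) (fun i _ => Nat.zero_le i) hx
    rw [hsum] at this
    simp only [id] at this
    exact Finset.mem_range.mpr (by omega)
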